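/- arXiv:1602.04184 — 4 statements merged into one kernel-verified Lean document; each statement's English description precedes it below -/
import Mathlib

section
/- There exists an IsMeBot program: a partial recursive code c : Nat.Partrec.Code such that for every input n : ℕ, c.eval n = Part.some (if n = Encodable.encode c then 1 else 0); i.e., c is a total program that outputs 1 (Cooperate) exactly when its input is its own code number, and 0 (Defect) otherwise. -/
/-- There exists an IsMeBot program: a partial recursive code that, on any
input `n`, halts and outputs `1` (Cooperate) exactly when `n` is its own
Gödel number, and `0` (Defect) otherwise. -/
theorem exists_isMeBot :
    ∃ c : Nat.Partrec.Code,
      ∀ n : ℕ, c.eval n = Part.some (if n = Encodable.encode c then 1 else 0) := by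
  have hg : Computable₂ (fun (c : Nat.Partrec.Code) (n : ℕ) =>
      if n = Encodable.encode c then 1 else 0) :=
    (Primrec.ite (Primrec.eq.comp Primrec.snd (Primrec.encode.comp Primrec.fst))
      (Primrec.const 1) (Primrec.const 0)).to_comp
  obtain ⟨c, hc⟩ := Nat.Partrec.Code.fixed_point₂
    (f := fun c n => Part.some (if n = Encodable.encode c then 1 else 0))
    hg.partrec₂
  exact ⟨c, fun n => by rw [hc]⟩
end

section
/- Let c : Nat.Partrec.Code satisfy the IsMeBot specification: for every n : ℕ, c.eval n = Part.some (if n = Encodable.encode c then 1 else 0). Then (i) c.eval (Encodable.encode c) = Part.some 1, so (c, c) plays (Cooperate, Cooperate) and each player receives payoff 2; and (ii) for every code d and every a ≤ 1 with d.eval (Encodable.encode c) = Part.some a, there exists b with c.eval (Encodable.encode d) = Part.some b and pay a b ≤ 2, and moreover if d ≠ c then pay a b ≤ 1. Hence no unilateral replacement of either player's program can yield a payoff above 2, i.e., (c, c) is a program equilibrium. -/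
/-- Payoff to player 1 in the open-source Prisoner's Dilemma when it outputs
`a` and the opponent outputs `b` (outputs in {0,1}, with 1 = Cooperate and
0 = Defect). -/
def pay : ℕ → ℕ → ℕ
  | 1, 1 => 2
  | 1, 0 => 0
  | 0, 1 => 3
  | 0, 0 => 1
  | _, _ => 0

/-- IsMeBot cooperates with itself (earning the mutual-cooperation payoff 2),
and no unilateral deviation can earn a payoff above 2 against IsMeBot; indeed
any deviating program `d ≠ c` earns at most 1.  Hence (IsMeBot, IsMeBot) is a
program equilibrium. -/
theorem isMeBot_program_equilibrium (c : Nat.Partrec.Code)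
    (hc : ∀ n : ℕ, c.eval n = Part.some (if n = Encodable.encode c then 1 else 0)) :
    c.eval (Encodable.encode c) = Part.some 1 ∧
      ∀ (d : Nat.Partrec.Code) (a : ℕ), a ≤ 1 →
        d.eval (Encodable.encode c) = Part.some a →
        ∃ b : ℕ, c.eval (Encodable.encode d) = Part.some b ∧
          pay a b ≤ 2 ∧ (d ≠ c → pay a b ≤ 1) := by
  refine ⟨by simp [hc], ?_⟩
  intro d a ha hda
  refine ⟨if Encodable.encode d = Encodable.encode c then 1 else 0, hc _, ?_⟩
  by_cases hd : d = c
  · subst hd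
    simp only [if_pos rfl]
    interval_cases a <;> simp_all [pay]
  · rw [if_neg (fun h => hd (Encodable.encode_injective h))]
    interval_cases a <;> simp [pay]
end

section
/- There exist two distinct partial recursive codes c₁ ≠ c₂ that each satisfy the IsMeBot specification (for each i and every n : ℕ, cᵢ.eval n = Part.some (if n = Encodable.encode cᵢ then 1 else 0)); consequently c₁.eval (Encodable.encode c₂) = Part.some 0 and c₂.eval (Encodable.encode c₁) = Part.some 0, so two different implementations of IsMeBot mutually defect, each receiving payoff 1 instead of the mutual-cooperation payoff 2. -/
open Nat.Partrec Nat.Partrec.Code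

private lemma exists_meBot_ne (c₀ : Code)
    (h₀ : c₀.eval (Encodable.encode c₀) = Part.some 1) :
    ∃ c : Code, c ≠ c₀ ∧
      ∀ n : ℕ, c.eval n = Part.some (if n = Encodable.encode c then 1 else 0) := by
  have hg : Computable₂ fun (c : Code) (n : ℕ) =>
      (if Encodable.encode c = Encodable.encode c₀ then 5
        else if n = Encodable.encode c then 1 else 0 : ℕ) := by
    apply Primrec₂.to_comp
    exact Primrec.ite (Primrec.eq.comp (Primrec.encode.comp Primrec.fst)
        (Primrec.const (Encodable.encode c₀)))
      (Primrec.const 5)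
      (Primrec.ite (Primrec.eq.comp Primrec.snd (Primrec.encode.comp Primrec.fst))
        (Primrec.const 1) (Primrec.const 0))
  obtain ⟨c, hc⟩ := fixed_point₂ hg.partrec₂
  by_cases h : c = c₀
  · exfalso
    have h1 := congrFun hc (Encodable.encode c)
    subst h
    simp at h1
    rw [h₀] at h1
    exact absurd (Part.some_inj.mp h1) (by norm_num)
  · refine ⟨c, h, fun n => ?_⟩
    have hne : Encodable.encode c ≠ Encodable.encode c₀ :=
      fun he => h (Encodable.encode_injective he)
    have := congrFun hc n
    simpa [hne] using this

private lemma exists_meBot :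
    ∃ c : Code, ∀ n : ℕ, c.eval n = Part.some (if n = Encodable.encode c then 1 else 0) := by
  have hg : Computable₂ fun (c : Code) (n : ℕ) =>
      (if n = Encodable.encode c then 1 else 0 : ℕ) := by
    apply Primrec₂.to_comp
    exact Primrec.ite (Primrec.eq.comp Primrec.snd (Primrec.encode.comp Primrec.fst))
      (Primrec.const 1) (Primrec.const 0)
  obtain ⟨c, hc⟩ := fixed_point₂ hg.partrec₂
  exact ⟨c, fun n => by simpa using congrFun hc n⟩

/-- There exist two distinct implementations of IsMeBot; being distinct, they
mutually defect against each other, each receiving payoff 1 instead of the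
mutual-cooperation payoff 2. -/
theorem two_isMeBots_mutually_defect :
    ∃ c₁ c₂ : Nat.Partrec.Code, c₁ ≠ c₂ ∧
      (∀ n : ℕ, c₁.eval n = Part.some (if n = Encodable.encode c₁ then 1 else 0)) ∧
      (∀ n : ℕ, c₂.eval n = Part.some (if n = Encodable.encode c₂ then 1 else 0)) ∧
      c₁.eval (Encodable.encode c₂) = Part.some 0 ∧
      c₂.eval (Encodable.encode c₁) = Part.some 0 := by
  obtain ⟨c₁, h₁⟩ := exists_meBot
  obtain ⟨c₂, hne, h₂⟩ := exists_meBot_ne c₁ (by rw [h₁]; simp)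
  have hne' : c₁ ≠ c₂ := fun h => hne h.symm
  refine ⟨c₁, c₂, hne', h₁, h₂, ?_, ?_⟩
  · rw [h₁, if_neg (fun he => hne (Encodable.encode_injective he))]
  · rw [h₂, if_neg (fun he => hne' (Encodable.encode_injective he))]
end

section
/- Geometric-mean interpolation between asymptotically separated functions: if f, g : ℕ → ℕ satisfy f ≺ g and f n ≥ 1 for all n, then the function w : ℕ → ℕ defined by w n = Nat.sqrt (f n * g n) satisfies f ≺ w and w ≺ g. (This is the construction used in the proof of Parametric Bounded Löb to choose g with lg k ≺ g(k) and 𝓔∘g ≺ f, and h with 𝓔∘g ≺ h ≺ f.) -/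
/-- Asymptotic domination: `Dom f g` (written `f ≺ g` in the paper) means that
for every `M` there is an `N` such that `M * f n < g n` for all `n > N`. -/
def Dom (f g : ℕ → ℕ) : Prop :=
  ∀ M : ℕ, ∃ N : ℕ, ∀ n > N, M * f n < g n

/-- Geometric-mean interpolation: if `f ≺ g` and `f ≥ 1` everywhere, then the
integer geometric mean `w n = √(f n * g n)` satisfies `f ≺ w ≺ g`. -/
theorem dom_sqrt_mul (f g : ℕ → ℕ) (hfg : Dom f g) (hf : ∀ n, 1 ≤ f n) :
    Dom f (fun n => Nat.sqrt (f n * g n)) ∧ Dom (fun n => Nat.sqrt (f n * g n)) g := by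
  constructor
  · intro M
    obtain ⟨N, hN⟩ := hfg ((M + 1) ^ 2)
    refine ⟨N, fun n hn => ?_⟩
    have h1 := hf n
    show M * f n < Nat.sqrt (f n * g n)
    have h2 := hN n hn
    have key : (M * f n + 1) * (M * f n + 1) ≤ f n * g n := calc (M * f n + 1) * (M * f n + 1) ≤ ((M + 1) * f n) * ((M + 1) * f n) := by nlinarith [mul_le_mul_right h1 (M * f n), Nat.mul_le_mul h1 h1]
      _ = f n * ((M + 1) ^ 2 * f n) := by ring
      _ ≤ f n * g n := Nat.mul_le_mul_left _ h2.le
    have := Nat.le_sqrt.mpr key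
    omega
  · intro M
    obtain ⟨N, hN⟩ := hfg (M ^ 2 + 1)
    refine ⟨N, fun n hn => ?_⟩
    have h2 := hN n hn
    have hg : 0 < g n := lt_of_le_of_lt (Nat.zero_le _) h2
    by_contra hc
    push_neg at hc
    have : g n * g n ≤ (M * Nat.sqrt (f n * g n)) * (M * Nat.sqrt (f n * g n)) :=
      Nat.mul_le_mul hc hc
    have hsq := Nat.sqrt_le (f n * g n)
    nlinarith
end
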